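/- arXiv:2502.12229 — 3 statements merged into one kernel-verified Lean document; each statement's English description precedes it below -/
import Mathlib

section
/- Let μ be a measure on ℝ with all moments finite and infinite support, with supp(μ) ⊆ [0,∞) and μ({0}) = 0. Assume that for every k ∈ ℕ₀ the polynomials are dense in L²(x^k·μ), where x^k·μ denotes the measure with density x ↦ x^k with respect to μ. Then for every n ∈ ℕ₀, the linear span of the monomial functions {x ↦ x^k : k ≥ n} is dense in L²(μ). -/
open MeasureTheory Polynomial Filter

noncomputable section

/-- A measure on `ℝ` has all moments finite. -/
def HasAllMoments (μ : Measure ℝ) : Prop :=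
  ∀ n : ℕ, Integrable (fun x : ℝ => |x| ^ n) μ

/-- The (topological) support of a measure on `ℝ`: points all of whose
neighborhoods have positive measure. -/
def mSupp (μ : Measure ℝ) : Set ℝ :=
  {x : ℝ | ∀ U ∈ nhds x, μ U ≠ 0}

/-- A measure with all moments finite is determinate if it is the unique measure
with all moments finite having its moment sequence. -/
def IsDeterminate (μ : Measure ℝ) : Prop :=
  ∀ ν : Measure ℝ, HasAllMoments ν →
    (∀ n : ℕ, ∫ x, x ^ n ∂ν = ∫ x, x ^ n ∂μ) → ν = μ

/-- The complex polynomial functions are dense in `L²(ν)`. -/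
def PolyDense (ν : Measure ℝ) : Prop :=
  Dense {f : Lp ℂ 2 ν | ∃ p : Polynomial ℂ, ⇑f =ᵐ[ν] fun x : ℝ => p.eval (x : ℂ)}

open scoped ENNReal NNReal

lemma memℒp_monomial (μ : Measure ℝ) (hmom : HasAllMoments μ) (k : ℕ) :
    MemLp (fun x : ℝ => ((x : ℂ)) ^ k) 2 μ := by
  have hcont : Continuous fun x : ℝ => ((x : ℂ)) ^ k :=
    (continuous_pow k).comp Complex.continuous_ofReal
  refine (memLp_two_iff_integrable_sq_norm hcont.aestronglyMeasurable).mpr ?_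
  refine (hmom (2 * k)).congr ?_
  filter_upwards with x
  simp [norm_pow, Complex.norm_real, ← pow_mul, mul_comm k 2]

lemma memℒp_poly (μ : Measure ℝ) (hmom : HasAllMoments μ) (p : Polynomial ℂ) :
    MemLp (fun x : ℝ => p.eval (x : ℂ)) 2 μ := by
  induction p using Polynomial.induction_on' with
  | add p q hp hq =>
    refine MemLp.ae_eq ?_ (hp.add hq)
    filter_upwards with x
    simp
  | monomial k a =>
    refine MemLp.ae_eq ?_ ((memℒp_monomial μ hmom k).const_mul a)
    filter_upwards with x
    simp [Polynomial.eval_monomial]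

theorem stmt1 (μ : Measure ℝ) (hmom : HasAllMoments μ) (hinf : (mSupp μ).Infinite)
    (hsupp : mSupp μ ⊆ Set.Ici (0 : ℝ)) (hmass : μ {0} = 0)
    (hdense : ∀ k : ℕ, PolyDense (μ.withDensity fun x => ENNReal.ofReal (x ^ k)))
    (n : ℕ) :
    Dense {f : Lp ℂ 2 μ | ∃ p : Polynomial ℂ,
      (∀ j : ℕ, j < n → p.coeff j = 0) ∧
      ⇑f =ᵐ[μ] fun x : ℝ => p.eval (x : ℂ)} := by
  set w : ℝ → ℝ≥0∞ := fun x => ENNReal.ofReal (x ^ (2 * n)) with hw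
  set ν : Measure ℝ := μ.withDensity w with hν
  have hw_meas : Measurable w := ENNReal.measurable_ofReal.comp (measurable_id.pow_const _)
  have hae0 : ∀ᵐ x ∂μ, x ≠ 0 := by
    rw [ae_iff]
    convert hmass using 2
    ext x; simp
  -- key : snorm transfer
  have key : ∀ h : ℝ → ℂ, AEStronglyMeasurable h μ →
      eLpNorm h 2 ν = eLpNorm (fun x : ℝ => (x : ℂ) ^ n * h x) 2 μ := by
    intro h hh
    have hhν : AEStronglyMeasurable h ν :=
      hh.mono_ac (withDensity_absolutelyContinuous μ w)
    rw [eLpNorm_eq_lintegral_rpow_enorm_toReal (by norm_num) (by norm_num),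
        eLpNorm_eq_lintegral_rpow_enorm_toReal (by norm_num) (by norm_num)]
    congr 1
    have := lintegral_withDensity_eq_lintegral_mul₀ (μ := μ) (f := w)
        hw_meas.aemeasurable
        (g := fun x => ‖h x‖ₑ ^ ((2 : ℝ≥0∞)).toReal)
        (hh.enorm.pow_const _)
    rw [this]
    refine lintegral_congr fun x => ?_
    simp only [Pi.mul_apply, ENNReal.toReal_ofNat]
    have hx2 : (0:ℝ) ≤ x ^ (2 * n) := by rw [pow_mul']; positivity
    rw [← ofReal_norm, ← ofReal_norm,
        ENNReal.ofReal_rpow_of_nonneg (norm_nonneg _) (by norm_num),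
        ENNReal.ofReal_rpow_of_nonneg (norm_nonneg _) (by norm_num),
        ← ENNReal.ofReal_mul hx2]
    congr 1
    rw [Real.rpow_two, Real.rpow_two]
    have : ‖(x : ℂ) ^ n * h x‖ = |x| ^ n * ‖h x‖ := by
      rw [norm_mul, norm_pow, Complex.norm_real, Real.norm_eq_abs]
    rw [this, mul_pow]
    congr 1
    rw [← abs_pow, sq_abs, ← pow_mul, mul_comm]
  rw [Metric.dense_iff]
  intro f r hr
  -- g = f / x^n
  set g : ℝ → ℂ := fun x => f x * ((x : ℂ) ^ n)⁻¹ with hgdef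
  have hg_meas : AEStronglyMeasurable g μ :=
    (Lp.aestronglyMeasurable f).mul
      (((continuous_pow n).comp Complex.continuous_ofReal).measurable.inv).aestronglyMeasurable
  have hgf : ∀ᵐ x : ℝ ∂μ, (x : ℂ) ^ n * g x = f x := by
    filter_upwards [hae0] with x hx
    have hxn : ((x : ℂ)) ^ n ≠ 0 := pow_ne_zero _ (by exact_mod_cast hx)
    simp only [hgdef]
    rw [mul_comm, mul_assoc, inv_mul_cancel₀ hxn, mul_one]
  have hg : MemLp g 2 ν := by
    refine ⟨hg_meas.mono_ac (withDensity_absolutelyContinuous μ w), ?_⟩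
    rw [key g hg_meas, eLpNorm_congr_ae hgf]
    exact Lp.eLpNorm_lt_top f
  obtain ⟨F, hFball, q, hFq⟩ := Metric.dense_iff.mp (hdense (2 * n)) (hg.toLp g) r hr
  set P : Polynomial ℂ := X ^ n * q with hP
  have hPmem : MemLp (fun x : ℝ => P.eval (x : ℂ)) 2 μ := memℒp_poly μ hmom P
  refine ⟨hPmem.toLp _, ?_, P, ?_, hPmem.coeFn_toLp⟩
  · rw [Metric.mem_ball]
    have hsub : AEStronglyMeasurable (fun x : ℝ => q.eval (x : ℂ) - g x) μ :=
      ((q.continuous.comp Complex.continuous_ofReal)).aestronglyMeasurable.sub hg_meas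
    have h1 : eLpNorm (⇑(hPmem.toLp _) - ⇑f) 2 μ
        = eLpNorm (fun x : ℝ => q.eval (x : ℂ) - g x) 2 ν := by
      rw [key _ hsub]
      refine eLpNorm_congr_ae ?_
      filter_upwards [hPmem.coeFn_toLp, hgf] with x hx1 hx2
      simp only [Pi.sub_apply]
      rw [hx1, hP]
      simp only [eval_mul, eval_pow, eval_X]
      rw [mul_sub, hx2]
    have h2 : eLpNorm (⇑F - ⇑(hg.toLp g)) 2 ν
        = eLpNorm (fun x : ℝ => q.eval (x : ℂ) - g x) 2 ν := by
      refine eLpNorm_congr_ae ?_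
      filter_upwards [hg.coeFn_toLp, hFq] with x hx1 hx2
      simp [hx1, hx2]
    have hb := Metric.mem_ball.mp hFball
    rw [Lp.dist_def] at hb ⊢
    rwa [h1, ← h2]
  · intro j hj
    exact X_pow_dvd_iff.mp (dvd_mul_right _ q) j hj
end
end

section
/- Let μ be a measure on ℝ with all moments finite and infinite support, with supp(μ) ⊆ [0,∞) and μ({0}) = 0, and let n ∈ ℕ₀. If the polynomials are dense in L²(x^{2n}·μ), where x^{2n}·μ denotes the measure with density x ↦ x^{2n} with respect to μ, then the linear span of the monomial functions {x ↦ x^k : k ≥ n} is dense in L²(μ). -/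
open MeasureTheory Polynomial Filter

noncomputable section

theorem stmt2 (μ : Measure ℝ) (hmom : HasAllMoments μ) (hinf : (mSupp μ).Infinite)
    (hsupp : mSupp μ ⊆ Set.Ici (0 : ℝ)) (hmass : μ {0} = 0) (n : ℕ)
    (hdense : PolyDense (μ.withDensity fun x => ENNReal.ofReal (x ^ (2 * n)))) :
    Dense {f : Lp ℂ 2 μ | ∃ p : Polynomial ℂ,
      (∀ j : ℕ, j < n → p.coeff j = 0) ∧
      ⇑f =ᵐ[μ] fun x : ℝ => p.eval (x : ℂ)} := by
  classical
  set w : ℝ → ENNReal := fun x => ENNReal.ofReal (x ^ (2 * n)) with hw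
  set ν : Measure ℝ := μ.withDensity w with hν
  have hwmeas : Measurable w := (measurable_id.pow_const (2 * n)).ennreal_ofReal
  -- Key identity: multiplying by x^n intertwines L²(μ) and L²(ν).
  have key : ∀ φ : ℝ → ℂ, Measurable φ →
      eLpNorm (fun x : ℝ => ((x : ℂ)) ^ n * φ x) 2 μ = eLpNorm φ 2 ν := by
    intro φ hφ
    rw [eLpNorm_eq_lintegral_rpow_enorm_toReal two_ne_zero ENNReal.ofNat_ne_top,
        eLpNorm_eq_lintegral_rpow_enorm_toReal two_ne_zero ENNReal.ofNat_ne_top]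
    congr 1
    have hmg : Measurable fun x : ℝ => ‖φ x‖ₑ ^ (2 : ENNReal).toReal :=
      ENNReal.continuous_rpow_const.measurable.comp hφ.enorm
    rw [hν, lintegral_withDensity_eq_lintegral_mul μ hwmeas hmg]
    refine lintegral_congr fun x => ?_
    show (‖((x : ℂ)) ^ n * φ x‖₊ : ENNReal) ^ (2 : ENNReal).toReal
        = w x * (‖φ x‖₊ : ENNReal) ^ (2 : ENNReal).toReal
    have hxn : (‖((x : ℂ)) ^ n‖₊ : ENNReal) = ENNReal.ofReal (|x| ^ n) := by
      rw [show ((‖((x : ℂ)) ^ n‖₊ : ENNReal)) = ENNReal.ofReal ‖((x : ℂ)) ^ n‖ from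
          (ofReal_norm _).symm, norm_pow, Complex.norm_real,
        Real.norm_eq_abs]
    have habs : (|x| ^ n) ^ (2 : ℝ) = x ^ (2 * n) := by
      rw [show ((2 : ℝ) = ((2 : ℕ) : ℝ)) by norm_num, Real.rpow_natCast,
        ← pow_mul, mul_comm n 2, pow_mul, sq_abs, ← pow_mul]
    rw [nnnorm_mul, ENNReal.coe_mul, ENNReal.mul_rpow_of_nonneg _ _ (by norm_num),
      hxn, ENNReal.ofReal_rpow_of_nonneg (by positivity) (by norm_num)]
    simp only [ENNReal.toReal_ofNat] at *
    rw [habs]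
  -- Polynomials are in L²(μ).
  have hpoly : ∀ p : Polynomial ℂ, MemLp (fun x : ℝ => p.eval (x : ℂ)) 2 μ := by
    intro p
    induction p using Polynomial.induction_on' with
    | add p q hp hq =>
      simp only [Polynomial.eval_add]
      exact hp.add hq
    | monomial k c =>
      simp only [Polynomial.eval_monomial]
      have hmeas : AEStronglyMeasurable (fun x : ℝ => ((x : ℂ)) ^ k) μ :=
        (Complex.measurable_ofReal.pow_const k).aestronglyMeasurable
      have hm : MemLp (fun x : ℝ => ((x : ℂ)) ^ k) 2 μ := by
        rw [memLp_two_iff_integrable_sq_norm hmeas]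
        have heq : (fun x : ℝ => ‖((x : ℂ)) ^ k‖ ^ 2) = fun x : ℝ => |x| ^ (2 * k) := by
          funext x
          rw [norm_pow, Complex.norm_real, Real.norm_eq_abs, ← pow_mul, mul_comm]
        rw [heq]
        exact hmom (2 * k)
      exact hm.const_mul c
  rw [Metric.dense_iff]
  intro f ε hε
  -- The function g = f / x^n lies in L²(ν).
  set g : ℝ → ℂ := fun x => f x / ((x : ℂ)) ^ n with hg
  have hgmeas : Measurable g :=
    (Lp.stronglyMeasurable f).measurable.div (Complex.measurable_ofReal.pow_const n)
  have h0 : ∀ᵐ x ∂μ, x ≠ (0 : ℝ) := by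
    rw [ae_iff]
    simpa [Set.setOf_eq_eq_singleton] using hmass
  have hfg : (fun x : ℝ => ((x : ℂ)) ^ n * g x) =ᵐ[μ] ⇑f := by
    filter_upwards [h0] with x hx
    have hxne : ((x : ℂ)) ^ n ≠ 0 := pow_ne_zero _ (Complex.ofReal_ne_zero.2 hx)
    rw [hg]
    simp only
    rw [mul_comm, div_mul_cancel₀ _ hxne]
  have hgmem : MemLp g 2 ν := by
    refine ⟨hgmeas.aestronglyMeasurable, ?_⟩
    rw [← key g hgmeas, eLpNorm_congr_ae hfg]
    exact Lp.eLpNorm_lt_top f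
  set G : Lp ℂ 2 ν := hgmem.toLp g with hG
  obtain ⟨P, hPb, p, hP⟩ := (Metric.dense_iff.1 hdense G ε hε)
  -- The approximating polynomial with vanishing low coefficients.
  have hqcoeff : ∀ j : ℕ, j < n → (p * Polynomial.X ^ n).coeff j = 0 := by
    intro j hj
    rw [Polynomial.coeff_mul_X_pow']
    exact if_neg (by omega)
  refine ⟨(hpoly (p * Polynomial.X ^ n)).toLp _, ?_, p * Polynomial.X ^ n, hqcoeff,
    (hpoly _).coeFn_toLp⟩
  rw [Metric.mem_ball]
  have hdisteq : dist ((hpoly (p * Polynomial.X ^ n)).toLp _) f = dist P G := by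
    rw [Lp.dist_def, Lp.dist_def]
    congr 1
    have e1 : ⇑((hpoly (p * Polynomial.X ^ n)).toLp _) - ⇑f
        =ᵐ[μ] fun x : ℝ => ((x : ℂ)) ^ n * (p.eval (x : ℂ) - g x) := by
      filter_upwards [(hpoly (p * Polynomial.X ^ n)).coeFn_toLp, hfg] with x hx1 hx2
      simp only [Pi.sub_apply]
      rw [hx1, ← hx2, Polynomial.eval_mul, Polynomial.eval_pow, Polynomial.eval_X]
      ring
    have e2 : ⇑P - ⇑G =ᵐ[ν] fun x : ℝ => p.eval (x : ℂ) - g x := by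
      filter_upwards [hP, hgmem.coeFn_toLp] with x hx1 hx2
      simp only [Pi.sub_apply]
      rw [hx1, hG] at *
      rw [hx2]
    rw [eLpNorm_congr_ae e1, eLpNorm_congr_ae e2]
    exact key _ ((p.continuous.measurable.comp Complex.measurable_ofReal).sub hgmeas)
  rw [hdisteq]
  exact Metric.mem_ball.1 hPb
end
end

section
/- Let ρ be a measure on ℝ with all moments finite, let C > 0, and let w : ℝ → [0,∞) be a measurable function with w(x) ≤ C for ρ-almost every x. If the polynomials are dense in L²(ρ), then the polynomials are dense in L²(w·ρ), where w·ρ denotes the measure with density w with respect to ρ. -/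
open MeasureTheory Polynomial Filter

noncomputable section

theorem stmt13 (ρ : Measure ℝ) (hmom : HasAllMoments ρ) (C : ℝ) (hC : 0 < C)
    (w : ℝ → ℝ) (hwmeas : Measurable w) (hw0 : ∀ x, 0 ≤ w x)
    (hwC : ∀ᵐ x ∂ρ, w x ≤ C) (hdense : PolyDense ρ) :
    PolyDense (ρ.withDensity fun x => ENNReal.ofReal (w x)) := by
  set ν := ρ.withDensity fun x => ENNReal.ofReal (w x) with hνdef
  -- ρ is a finite measure
  have hfin : IsFiniteMeasure ρ := by
    have h0 := hmom 0
    simp only [pow_zero] at h0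
    rcases integrable_const_iff.mp h0 with h | h
    · exact absurd h one_ne_zero
    · exact h
  set c := ENNReal.ofReal C with hcdef
  have hc0 : c ≠ 0 := (ENNReal.ofReal_pos.mpr hC).ne'
  have hctop : c ≠ ⊤ := ENNReal.ofReal_ne_top
  have hνle : ν ≤ c • ρ := by
    rw [hνdef, hcdef, ← withDensity_const]
    exact withDensity_mono <| by
      filter_upwards [hwC] with x hx using ENNReal.ofReal_le_ofReal hx
  set K := c ^ ((1 : ENNReal) / 2).toReal with hKdef
  have hKtop : K ≠ ⊤ := ENNReal.rpow_ne_top_of_nonneg ENNReal.toReal_nonneg hctop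
  have hbound : ∀ g : ℝ → ℂ, eLpNorm g 2 ν ≤ K * eLpNorm g 2 ρ := by
    intro g
    calc eLpNorm g 2 ν ≤ eLpNorm g 2 (c • ρ) := eLpNorm_mono_measure g hνle
      _ = K * eLpNorm g 2 ρ := by
          rw [eLpNorm_smul_measure_of_ne_zero hc0, smul_eq_mul]
  have hmemν : ∀ g : ℝ → ℂ, MemLp g 2 ρ → MemLp g 2 ν := fun g hg =>
    (hg.smul_measure hctop).mono_measure hνle
  rw [PolyDense, Metric.dense_iff]
  intro f r hr
  -- Step 1: approximate f by a simple function in L²(ν)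
  obtain ⟨s, hs1, hs2⟩ := (Lp.memLp f).exists_simpleFunc_eLpNorm_sub_lt
    (p := 2) ENNReal.ofNat_ne_top (ε := ENNReal.ofReal (r / 2))
    (ENNReal.ofReal_pos.mpr (by linarith)).ne'
  -- s is bounded, hence in L²(ρ)
  obtain ⟨B, hB⟩ := s.exists_forall_norm_le
  have hsρ : MemLp (⇑s) 2 ρ :=
    MemLp.of_bound s.aestronglyMeasurable B (ae_of_all _ hB)
  -- Step 2: approximate s in L²(ρ) by a polynomial
  set δ := (r / 2) / (K.toReal + 1) with hδdef
  have hK0 : (0:ℝ) ≤ K.toReal := ENNReal.toReal_nonneg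
  have hδ0 : 0 < δ := by positivity
  obtain ⟨h, hhball, q, hq⟩ := Metric.dense_iff.mp hdense (hsρ.toLp ⇑s) δ hδ0
  set g : ℝ → ℂ := fun x : ℝ => q.eval (x : ℂ) with hgdef
  have hgρ : MemLp g 2 ρ := (Lp.memLp h).ae_eq hq
  have hgν : MemLp g 2 ν := hmemν g hgρ
  -- the distance bound in L²(ρ)
  have hdist : eLpNorm (⇑s - g) 2 ρ < ENNReal.ofReal δ := by
    have h1 : dist (hsρ.toLp ⇑s) h < δ := by
      rw [dist_comm]; exact Metric.mem_ball.mp hhball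
    rw [Lp.dist_def] at h1
    have hne : eLpNorm (⇑(hsρ.toLp ⇑s) - ⇑h) 2 ρ ≠ ⊤ :=
      ((Lp.memLp _).sub (Lp.memLp h)).eLpNorm_ne_top
    have h2 : eLpNorm (⇑(hsρ.toLp ⇑s) - ⇑h) 2 ρ < ENNReal.ofReal δ :=
      (ENNReal.lt_ofReal_iff_toReal_lt hne).mpr h1
    have hcong : ⇑(hsρ.toLp ⇑s) - ⇑h =ᵐ[ρ] ⇑s - g := by
      filter_upwards [hsρ.coeFn_toLp, hq] with x hx hx' using by
        simp [Pi.sub_apply, hx, hx']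
    rwa [eLpNorm_congr_ae hcong] at h2
  -- transfer to L²(ν)
  have h3 : eLpNorm (⇑s - g) 2 ν ≤ K * ENNReal.ofReal δ :=
    (hbound _).trans (mul_le_mul_right hdist.le K)
  have h4 : K * ENNReal.ofReal δ < ENNReal.ofReal (r / 2) := by
    rw [← ENNReal.ofReal_toReal hKtop, ← ENNReal.ofReal_mul hK0]
    refine ENNReal.ofReal_lt_ofReal_iff (by linarith) |>.mpr ?_
    have hne : K.toReal + 1 ≠ 0 := by positivity
    have heq : (K.toReal + 1) * δ = r / 2 := by
      rw [hδdef]; field_simp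
    nlinarith [hδ0]
  -- assemble
  refine ⟨hgν.toLp g, ?_, q, hgν.coeFn_toLp⟩
  rw [Metric.mem_ball, dist_comm, Lp.dist_def]
  have h5 : eLpNorm (⇑f - ⇑(hgν.toLp g)) 2 ν < ENNReal.ofReal r := by
    have hcong : ⇑f - ⇑(hgν.toLp g) =ᵐ[ν] (⇑f - ⇑s) + (⇑s - g) := by
      filter_upwards [hgν.coeFn_toLp] with x hx using by
        simp [Pi.sub_apply, Pi.add_apply, hx]
    calc eLpNorm (⇑f - ⇑(hgν.toLp g)) 2 ν
        = eLpNorm ((⇑f - ⇑s) + (⇑s - g)) 2 ν := eLpNorm_congr_ae hcong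
      _ ≤ eLpNorm (⇑f - ⇑s) 2 ν + eLpNorm (⇑s - g) 2 ν :=
          eLpNorm_add_le ((Lp.memLp f).sub hs2).1 (hs2.sub hgν).1 (by norm_num)
      _ < ENNReal.ofReal (r / 2) + ENNReal.ofReal (r / 2) :=
          ENNReal.add_lt_add hs1 (lt_of_le_of_lt h3 h4)
      _ = ENNReal.ofReal r := by
          rw [← ENNReal.ofReal_add (by linarith) (by linarith)]; norm_num
  exact ENNReal.toReal_lt_of_lt_ofReal h5
end
end
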